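/- There is no nontrivial closed V-path a₀, b₀, a₁, …, b_r, a_{r+1} in which a₀ is a face sequence of type 3, 5 or 7. -/

import Mathlib

set_option linter.unusedVariables false

/-- The alphabet `{0, 1, ∗}` for face sequences. -/
inductive Letter : Type
  | zero
  | one
  | star
  deriving DecidableEq

/-- A sequence of length `n` over the alphabet `{0, 1, ∗}`. -/
abbrev FSeq (n : ℕ) := Fin n → Letter

/-- `S(1)`, the number of `1`'s in `S`. -/
def count1 {n : ℕ} (S : FSeq n) : ℕ := (Finset.univ.filter fun i => S i = Letter.one).card

/-- `S(0)`, the number of `0`'s in `S`. -/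
def count0 {n : ℕ} (S : FSeq n) : ℕ := (Finset.univ.filter fun i => S i = Letter.zero).card

/-- The number of `∗`'s in `S`. -/
def countStar {n : ℕ} (S : FSeq n) : ℕ := (Finset.univ.filter fun i => S i = Letter.star).card

/-- A face sequence: either no `∗` and exactly `k` ones, or at most `k-1` ones and
(#ones) + (#stars) ≥ `k+1`. -/
def FaceSeq {n : ℕ} (k : ℕ) (S : FSeq n) : Prop :=
  (countStar S = 0 ∧ count1 S = k) ∨ (count1 S + 1 ≤ k ∧ k + 1 ≤ count1 S + countStar S)

/-- `v₀`, the sequence of `k` ones followed by `n - k` zeros. -/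
def v0seq (n k : ℕ) : FSeq n := fun i => if (i : ℕ) < k then Letter.one else Letter.zero

/-- `S` contains at least one `∗`. -/
def hasStar {n : ℕ} (S : FSeq n) : Prop := ∃ i, S i = Letter.star

/-- There is a `1` to the right of the rightmost `∗` (in particular `S` contains a `∗`). -/
def OneRight {n : ℕ} (S : FSeq n) : Prop :=
  hasStar S ∧ ∃ i, S i = Letter.one ∧ ∀ j, i < j → S j ≠ Letter.star

/-- There is no `1` to the right of the rightmost `∗` (and `S` contains a `∗`). -/
def NoOneRight {n : ℕ} (S : FSeq n) : Prop :=
  hasStar S ∧ ∀ i, S i = Letter.one → ∃ j, i < j ∧ S j = Letter.star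

/-- There is a `0` to the left of the leftmost `∗` (in particular `S` contains a `∗`). -/
def ZeroLeft {n : ℕ} (S : FSeq n) : Prop :=
  hasStar S ∧ ∃ i, S i = Letter.zero ∧ ∀ j, j < i → S j ≠ Letter.star

/-- There is no `0` to the left of the leftmost `∗` (and `S` contains a `∗`). -/
def NoZeroLeft {n : ℕ} (S : FSeq n) : Prop :=
  hasStar S ∧ ∀ i, S i = Letter.zero → ∃ j, j < i ∧ S j = Letter.star

/-- `i` is the position of the rightmost `1` of `S`. -/
def IsRightmostOne {n : ℕ} (S : FSeq n) (i : Fin n) : Prop :=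
  S i = Letter.one ∧ ∀ j, i < j → S j ≠ Letter.one

/-- `i` is the position of the rightmost `∗` of `S`. -/
def IsRightmostStar {n : ℕ} (S : FSeq n) (i : Fin n) : Prop :=
  S i = Letter.star ∧ ∀ j, i < j → S j ≠ Letter.star

/-- `i` is the position of the leftmost `0` of `S`. -/
def IsLeftmostZero {n : ℕ} (S : FSeq n) (i : Fin n) : Prop :=
  S i = Letter.zero ∧ ∀ j, j < i → S j ≠ Letter.zero

/-- `i` is the position of the leftmost `∗` of `S`. -/
def IsLeftmostStar {n : ℕ} (S : FSeq n) (i : Fin n) : Prop :=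
  S i = Letter.star ∧ ∀ j, j < i → S j ≠ Letter.star

/-- Condition of rule (1), subcondition (a). -/
def Cond1a {n : ℕ} (k m0 m1 : ℕ) (S : FSeq n) : Prop :=
  count1 S + 1 ≤ k ∧ OneRight S ∧ count1 S ≠ m1

/-- Condition of rule (1), subcondition (b). -/
def Cond1b {n : ℕ} (k m0 m1 : ℕ) (S : FSeq n) : Prop :=
  count1 S + 1 ≤ k ∧ OneRight S ∧ count1 S = m1 ∧ m0 < count0 S

/-- Condition of rule (1), subcondition (c): no `0` to the left of the leftmost `∗`. -/
def Cond1c {n : ℕ} (k m0 m1 : ℕ) (S : FSeq n) : Prop :=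
  count1 S + 1 ≤ k ∧ OneRight S ∧ count1 S = m1 ∧ count0 S = m0 ∧ NoZeroLeft S

/-- Condition of rule (2), subcondition (a): here `count1 S + 1 ≠ m1` encodes `S(1) ≠ m₁ - 1`. -/
def Cond2a {n : ℕ} (k m0 m1 : ℕ) (S : FSeq n) : Prop :=
  count1 S + 2 ≤ k ∧ NoOneRight S ∧ count1 S + 1 ≠ m1

/-- Condition of rule (2), subcondition (b). -/
def Cond2b {n : ℕ} (k m0 m1 : ℕ) (S : FSeq n) : Prop :=
  count1 S + 2 ≤ k ∧ NoOneRight S ∧ count1 S + 1 = m1 ∧ m0 < count0 S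

/-- Condition of rule (2), subcondition (c). -/
def Cond2c {n : ℕ} (k m0 m1 : ℕ) (S : FSeq n) : Prop :=
  count1 S + 2 ≤ k ∧ NoOneRight S ∧ count1 S + 1 = m1 ∧ count0 S = m0 ∧ NoZeroLeft S

/-- `S` is of type 1 (satisfies the condition of rule (1)). -/
def Type1 {n : ℕ} (k m0 m1 : ℕ) (S : FSeq n) : Prop :=
  Cond1a k m0 m1 S ∨ Cond1b k m0 m1 S ∨ Cond1c k m0 m1 S

/-- `S` is of type 2 (satisfies the condition of rule (2)). -/
def Type2 {n : ℕ} (k m0 m1 : ℕ) (S : FSeq n) : Prop :=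
  Cond2a k m0 m1 S ∨ Cond2b k m0 m1 S ∨ Cond2c k m0 m1 S

/-- `S` is of type 3: `S(1) = k-1`, `S(0) ≤ n-k-1`, no `1` right of the rightmost `∗`,
a `0` left of the leftmost `∗`. -/
def Type3 {n : ℕ} (k : ℕ) (S : FSeq n) : Prop :=
  count1 S + 1 = k ∧ count0 S + k + 1 ≤ n ∧ NoOneRight S ∧ ZeroLeft S

/-- `S` is of type 4: `S(1) = k-1`, `S(0) ≤ n-k-2`, no `1` right of the rightmost `∗`,
no `0` left of the leftmost `∗`. -/
def Type4 {n : ℕ} (k : ℕ) (S : FSeq n) : Prop :=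
  count1 S + 1 = k ∧ count0 S + k + 2 ≤ n ∧ NoOneRight S ∧ NoZeroLeft S

/-- `S` is of type 5: `S(1) = m₁`, `S(0) ≤ m₀`, a `1` right of the rightmost `∗`,
a `0` left of the leftmost `∗`. -/
def Type5 {n : ℕ} (m0 m1 : ℕ) (S : FSeq n) : Prop :=
  count1 S = m1 ∧ count0 S ≤ m0 ∧ OneRight S ∧ ZeroLeft S

/-- `S` is of type 6: `S(1) = m₁`, `S(0) < m₀`, a `1` right of the rightmost `∗`,
no `0` left of the leftmost `∗`. -/
def Type6 {n : ℕ} (m0 m1 : ℕ) (S : FSeq n) : Prop :=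
  count1 S = m1 ∧ count0 S < m0 ∧ OneRight S ∧ NoZeroLeft S

/-- `S` is of type 7: `S(1) = m₁-1`, `S(0) ≤ m₀`, no `1` right of the rightmost `∗`,
a `0` left of the leftmost `∗`. -/
def Type7 {n : ℕ} (m0 m1 : ℕ) (S : FSeq n) : Prop :=
  count1 S + 1 = m1 ∧ count0 S ≤ m0 ∧ NoOneRight S ∧ ZeroLeft S

/-- `S` is of type 8: `S(1) = m₁-1`, `S(0) < m₀`, no `1` right of the rightmost `∗`,
no `0` left of the leftmost `∗`. -/
def Type8 {n : ℕ} (m0 m1 : ℕ) (S : FSeq n) : Prop :=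
  count1 S + 1 = m1 ∧ count0 S < m0 ∧ NoOneRight S ∧ NoZeroLeft S

/-- `S` is of type 9: `S(1) = k`, `S(0) = n-k`, and `S ≠ v₀`. -/
def Type9 {n : ℕ} (k : ℕ) (S : FSeq n) : Prop :=
  count1 S = k ∧ count0 S + k = n ∧ S ≠ v0seq n k

/-- `S` is of type 10: `S(1) = k-1`, `S(0) = n-k-1`, no `1` right of the rightmost `∗`,
no `0` left of the leftmost `∗`. -/
def Type10 {n : ℕ} (k : ℕ) (S : FSeq n) : Prop :=
  count1 S + 1 = k ∧ count0 S + k + 1 = n ∧ NoOneRight S ∧ NoZeroLeft S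

/-- `S` is of type `i` for `1 ≤ i ≤ 10` (and of no type otherwise). -/
def OfType {n : ℕ} (k m0 m1 : ℕ) (i : ℕ) (S : FSeq n) : Prop :=
  match i with
  | 1 => Type1 k m0 m1 S
  | 2 => Type2 k m0 m1 S
  | 3 => Type3 k S
  | 4 => Type4 k S
  | 5 => Type5 m0 m1 S
  | 6 => Type6 m0 m1 S
  | 7 => Type7 m0 m1 S
  | 8 => Type8 m0 m1 S
  | 9 => Type9 k S
  | 10 => Type10 k S
  | _ => False

/-- The replacement of rule (1): replace the rightmost `1` with `∗`. -/
def Apply1 {n : ℕ} (S S' : FSeq n) : Prop :=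
  ∃ i, IsRightmostOne S i ∧ S' = Function.update S i Letter.star

/-- The replacement of rule (2): replace the rightmost `∗` with `1`. -/
def Apply2 {n : ℕ} (S S' : FSeq n) : Prop :=
  ∃ i, IsRightmostStar S i ∧ S' = Function.update S i Letter.one

/-- The replacement of rules (3), (5) and (7): replace the leftmost `0` with `∗`. -/
def Apply3 {n : ℕ} (S S' : FSeq n) : Prop :=
  ∃ i, IsLeftmostZero S i ∧ S' = Function.update S i Letter.star

/-- The replacement of rules (4), (6) and (8): replace the leftmost `∗` with `0`. -/
def Apply4 {n : ℕ} (S S' : FSeq n) : Prop :=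
  ∃ i, IsLeftmostStar S i ∧ S' = Function.update S i Letter.zero

/-- The replacement of rule (9): replace the leftmost `0` and the rightmost `1` each with `∗`. -/
def Apply9 {n : ℕ} (S S' : FSeq n) : Prop :=
  ∃ i j, IsLeftmostZero S i ∧ IsRightmostOne S j ∧
    S' = Function.update (Function.update S i Letter.star) j Letter.star

/-- The replacement of rule (10): replace the leftmost `∗` with `0` and the other `∗` with `1`. -/
def Apply10 {n : ℕ} (S S' : FSeq n) : Prop :=
  ∃ i j, IsLeftmostStar S i ∧ IsRightmostStar S j ∧ i ≠ j ∧
    S' = Function.update (Function.update S i Letter.zero) j Letter.one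

/-- The matching `V` on face sequences: a face sequence `S` of type 1, 3, 5, 7 or 9 is
matched with the result `S'` of applying the corresponding rule to it. -/
def Vmatch {n : ℕ} (k m0 m1 : ℕ) (S S' : FSeq n) : Prop :=
  FaceSeq k S ∧
    ((Type1 k m0 m1 S ∧ Apply1 S S') ∨
     (Type3 k S ∧ Apply3 S S') ∨
     (Type5 m0 m1 S ∧ Apply3 S S') ∨
     (Type7 m0 m1 S ∧ Apply3 S S') ∨
     (Type9 k S ∧ Apply9 S S'))

/-- The vertex set of a face sequence `S`: the vertex sequences (0/1-sequences with
exactly `k` ones) agreeing with `S` wherever `S` is not `∗`. -/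
def VertexSet {n : ℕ} (k : ℕ) (S : FSeq n) : Set (FSeq n) :=
  {v | (∀ i, v i ≠ Letter.star) ∧ count1 v = k ∧ ∀ i, S i ≠ Letter.star → v i = S i}

/-- The dimension of the face `F(S)`. -/
def fdim {n : ℕ} (S : FSeq n) : ℕ :=
  if countStar S = 0 then 0 else countStar S - 1

/-- `T` is a codimension-1 face of `S`. -/
def Codim1 {n : ℕ} (k : ℕ) (T S : FSeq n) : Prop :=
  VertexSet k T ⊂ VertexSet k S ∧ fdim T + 1 = fdim S

/-- A (nontrivial) `V`-path `a₀, b₀, a₁, b₁, …, b_r, a_{r+1}` of face sequences. -/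
structure VPath (n k m0 m1 r : ℕ) where
  a : Fin (r + 2) → FSeq n
  b : Fin (r + 1) → FSeq n
  face_a : ∀ i, FaceSeq k (a i)
  face_b : ∀ i, FaceSeq k (b i)
  mem : ∀ i : Fin (r + 1), Vmatch k m0 m1 (a i.castSucc) (b i)
  codim_left : ∀ i : Fin (r + 1), Codim1 k (a i.castSucc) (b i)
  codim_right : ∀ i : Fin (r + 1), Codim1 k (a i.succ) (b i)
  step_ne : ∀ i : Fin (r + 1), a i.castSucc ≠ a i.succ

open Finset Function

namespace VAux

lemma letter_cases (l : Letter) : l = Letter.zero ∨ l = Letter.one ∨ l = Letter.star := by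
  cases l <;> simp

lemma count_sum {n : ℕ} (S : FSeq n) : count0 S + count1 S + countStar S = n := by
  classical
  unfold count0 count1 countStar
  rw [← Finset.card_union_of_disjoint, ← Finset.card_union_of_disjoint]
  · have h : ((univ.filter fun i => S i = Letter.zero) ∪ (univ.filter fun i => S i = Letter.one))
        ∪ (univ.filter fun i => S i = Letter.star) = (univ : Finset (Fin n)) := by
      ext i
      simp only [mem_union, mem_filter, mem_univ, true_and, iff_true]
      cases S i <;> simp
    rw [h, card_univ, Fintype.card_fin]
  · rw [disjoint_left]
    intro i hi hi'
    simp only [mem_union, mem_filter, mem_univ, true_and] at hi hi'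
    rcases hi with h | h <;> rw [h] at hi' <;> exact Letter.noConfusion hi'
  · rw [disjoint_left]
    intro i hi hi'
    simp only [mem_filter, mem_univ, true_and] at hi hi'
    rw [hi] at hi'; exact Letter.noConfusion hi'

lemma filter_update_of_ne {n : ℕ} (S : FSeq n) (x : Fin n) (c L : Letter)
    (h1 : S x ≠ L) (h2 : c ≠ L) :
    (univ.filter fun j => Function.update S x c j = L) = univ.filter fun j => S j = L := by
  ext j
  simp only [mem_filter, mem_univ, true_and]
  rcases eq_or_ne j x with rfl | hj
  · rw [Function.update_self]; exact iff_of_false h2 h1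
  · rw [Function.update_of_ne hj]

lemma filter_update_add {n : ℕ} (S : FSeq n) (x : Fin n) (c L : Letter)
    (h1 : S x ≠ L) (h2 : c = L) :
    (univ.filter fun j => Function.update S x c j = L).card
      = (univ.filter fun j => S j = L).card + 1 := by
  have h : (univ.filter fun j => Function.update S x c j = L)
      = insert x (univ.filter fun j => S j = L) := by
    ext j
    simp only [mem_insert, mem_filter, mem_univ, true_and]
    rcases eq_or_ne j x with rfl | hj
    · rw [Function.update_self]; simp [h2]
    · rw [Function.update_of_ne hj]; simp [hj]
  rw [h, card_insert_of_notMem (by simp [h1])]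

lemma filter_update_sub {n : ℕ} (S : FSeq n) (x : Fin n) (c L : Letter)
    (h1 : S x = L) (h2 : c ≠ L) :
    (univ.filter fun j => Function.update S x c j = L).card + 1
      = (univ.filter fun j => S j = L).card := by
  have h : (univ.filter fun j => S j = L)
      = insert x (univ.filter fun j => Function.update S x c j = L) := by
    ext j
    simp only [mem_insert, mem_filter, mem_univ, true_and]
    rcases eq_or_ne j x with rfl | hj
    · rw [Function.update_self]; simp [h1, h2]
    · rw [Function.update_of_ne hj]; simp [hj]
  rw [h, card_insert_of_notMem (by simp [Function.update_self, h2]), Nat.add_comm]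

lemma countStar_pos {n : ℕ} {S : FSeq n} (h : hasStar S) : 1 ≤ countStar S := by
  obtain ⟨i, hi⟩ := h
  have : i ∈ univ.filter fun j => S j = Letter.star := by simp [hi]
  exact card_pos.mpr ⟨i, this⟩

lemma faceSeq_star {n k : ℕ} {S : FSeq n} (hF : FaceSeq k S) (h : hasStar S) :
    count1 S + 1 ≤ k ∧ k + 1 ≤ count1 S + countStar S ∧ 2 ≤ countStar S := by
  rcases hF with ⟨h0, _⟩ | ⟨h1, h2⟩
  · exact absurd (countStar_pos h) (by omega)
  · exact ⟨h1, h2, by omega⟩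

end VAux
namespace VAux

lemma exists_vertex_star {n k : ℕ} {T : FSeq n} (hF : FaceSeq k T) {j : Fin n}
    (hj : T j = Letter.star) (c : Letter) (hc : c ≠ Letter.star) :
    ∃ v, v ∈ VertexSet k T ∧ v j = c := by
  classical
  obtain ⟨hc1, hks, h2⟩ := faceSeq_star hF ⟨j, hj⟩
  set Z : Finset (Fin n) := univ.filter fun i => T i = Letter.star with hZ
  have hjZ : j ∈ Z := by simp [hZ, hj]
  have hZcard : Z.card = countStar T := rfl
  have hm1 : 1 ≤ k - count1 T := by omega
  have hm2 : k - count1 T ≤ Z.card - 1 := by rw [hZcard]; omega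
  have hcard_erase : (Z.erase j).card = Z.card - 1 := card_erase_of_mem hjZ
  -- choose P ⊆ Z with card = k - count1 T, containing j iff c = one
  have hP : ∃ P : Finset (Fin n), P ⊆ Z ∧ P.card = k - count1 T ∧
      (c = Letter.one → j ∈ P) ∧ (c = Letter.zero → j ∉ P) := by
    rcases letter_cases c with rfl | rfl | rfl
    · obtain ⟨P, hPs, hPc⟩ := Finset.exists_subset_card_eq
        (s := Z.erase j) (n := k - count1 T) (by omega)
      refine ⟨P, hPs.trans (erase_subset _ _), hPc, by simp, fun _ => ?_⟩
      intro hjP; exact (notMem_erase j Z) (hPs hjP)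
    · obtain ⟨P, hPs, hPc⟩ := Finset.exists_subset_card_eq
        (s := Z.erase j) (n := k - count1 T - 1) (by omega)
      have hjP : j ∉ P := fun h => (notMem_erase j Z) (hPs h)
      refine ⟨insert j P, ?_, ?_, fun _ => mem_insert_self _ _, by simp⟩
      · intro i hi
        rcases mem_insert.mp hi with rfl | h
        · exact hjZ
        · exact (erase_subset _ _) (hPs h)
      · rw [card_insert_of_notMem hjP, hPc]; omega
    · exact absurd rfl hc
  obtain ⟨P, hPZ, hPcard, hPone, hPzero⟩ := hP
  have hPstar : ∀ i ∈ P, T i = Letter.star := fun i hi => (mem_filter.mp (hPZ hi)).2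
  set v : FSeq n := fun i => if i ∈ P then Letter.one
    else if T i = Letter.star then Letter.zero else T i with hv
  have hvP : ∀ i ∈ P, v i = Letter.one := fun i hi => by simp [hv, hi]
  have hvagree : ∀ i, T i ≠ Letter.star → v i = T i := by
    intro i hi
    have hiP : i ∉ P := fun h => hi (hPstar i h)
    simp [hv, hiP, hi]
  have hvnostar : ∀ i, v i ≠ Letter.star := by
    intro i
    simp only [hv]
    split_ifs with h1 h2 <;> simp_all
  have hvone : ∀ i, v i = Letter.one ↔ (T i = Letter.one ∨ i ∈ P) := by
    intro i
    by_cases hiP : i ∈ P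
    · simp [hv, hiP]
    · by_cases hs : T i = Letter.star
      · simp [hv, hiP, hs]
      · simp [hv, hiP, hs]
  have hcount : count1 v = k := by
    have hfe : (univ.filter fun i => v i = Letter.one)
        = (univ.filter fun i => T i = Letter.one) ∪ P := by
      ext i
      simp only [mem_union, mem_filter, mem_univ, true_and]
      rw [hvone i]
    have hdisj : Disjoint (univ.filter fun i => T i = Letter.one) P := by
      rw [disjoint_left]
      intro i hi hi'
      have := hPstar i hi'
      simp only [mem_filter, mem_univ, true_and] at hi
      rw [hi] at this; exact Letter.noConfusion this
    unfold count1
    rw [hfe, card_union_of_disjoint hdisj, hPcard]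
    have : count1 T = (univ.filter fun i => T i = Letter.one).card := rfl
    omega
  refine ⟨v, ⟨hvnostar, hcount, hvagree⟩, ?_⟩
  rcases letter_cases c with rfl | rfl | rfl
  · have := hPzero rfl; simp [hv, this, hj]
  · exact hvP j (hPone rfl)
  · exact absurd rfl hc

lemma vertexSet_nonempty {n k : ℕ} {T : FSeq n} (hF : FaceSeq k T) :
    ∃ v, v ∈ VertexSet k T := by
  classical
  by_cases h : hasStar T
  · obtain ⟨j, hj⟩ := h
    obtain ⟨v, hv, _⟩ := exists_vertex_star hF hj Letter.zero (by simp)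
    exact ⟨v, hv⟩
  · refine ⟨T, ?_, ?_, fun i _ => rfl⟩
    · intro i hi; exact h ⟨i, hi⟩
    · rcases hF with ⟨_, h1⟩ | ⟨h1, h2⟩
      · exact h1
      · have : countStar T = 0 := by
          by_contra hne
          obtain ⟨i, hi⟩ := card_pos.mp (Nat.pos_of_ne_zero hne)
          exact h ⟨i, (mem_filter.mp hi).2⟩
        omega

lemma vertex_refine {n k : ℕ} {T S : FSeq n} (hT : FaceSeq k T) (hS : FaceSeq k S)
    (h : VertexSet k T ⊆ VertexSet k S) : ∀ i, S i ≠ Letter.star → T i = S i := by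
  intro i hSi
  by_cases hTi : T i = Letter.star
  · obtain ⟨v0, hv0, hv0i⟩ := exists_vertex_star hT hTi Letter.zero (by simp)
    obtain ⟨v1, hv1, hv1i⟩ := exists_vertex_star hT hTi Letter.one (by simp)
    have h0 : v0 i = S i := (h hv0).2.2 i hSi
    have h1 : v1 i = S i := (h hv1).2.2 i hSi
    rw [hv0i] at h0; rw [hv1i] at h1
    rw [← h0] at h1; exact Letter.noConfusion h1
  · obtain ⟨v, hv⟩ := vertexSet_nonempty hT
    have h1 : v i = T i := hv.2.2 i hTi
    have h2 : v i = S i := (h hv).2.2 i hSi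
    rw [← h1, h2]

end VAux
namespace VAux

lemma codim_decomp {n k : ℕ} {v B : FSeq n} (hv : FaceSeq k v) (hB : FaceSeq k B)
    (hc : Codim1 k v B) (h3 : 3 ≤ countStar B) :
    ∃ y c, B y = Letter.star ∧ c ≠ Letter.star ∧ v = Function.update B y c := by
  classical
  have hsub : VertexSet k v ⊆ VertexSet k B := hc.1.subset
  have hagree : ∀ i, B i ≠ Letter.star → v i = B i := vertex_refine hv hB hsub
  set SV : Finset (Fin n) := univ.filter fun i => v i = Letter.star with hSV
  set SB : Finset (Fin n) := univ.filter fun i => B i = Letter.star with hSB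
  have hVB : SV ⊆ SB := by
    intro i hi
    simp only [hSV, hSB, mem_filter, mem_univ, true_and] at hi ⊢
    by_contra hne
    rw [hagree i hne] at hi; exact hne hi
  have hfB : fdim B = countStar B - 1 := by
    unfold fdim; rw [if_neg (by omega)]
  have hcsv : countStar v = countStar B - 1 := by
    have h2 := hc.2
    rw [hfB] at h2
    unfold fdim at h2
    by_cases h : countStar v = 0
    · rw [if_pos h] at h2; omega
    · rw [if_neg h] at h2; omega
  have hcard : (SB \ SV).card = 1 := by
    rw [card_sdiff_of_subset hVB]
    have h1 : SV.card = countStar v := rfl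
    have h2 : SB.card = countStar B := rfl
    omega
  obtain ⟨y, hy⟩ := card_eq_one.mp hcard
  have hyB : B y = Letter.star := by
    have : y ∈ SB \ SV := hy ▸ mem_singleton_self y
    exact (mem_filter.mp (mem_sdiff.mp this).1).2
  have hyV : v y ≠ Letter.star := by
    have : y ∈ SB \ SV := hy ▸ mem_singleton_self y
    have h' := (mem_sdiff.mp this).2
    intro hvy; exact h' (by simp [hSV, hvy])
  refine ⟨y, v y, hyB, hyV, ?_⟩
  funext i
  rcases eq_or_ne i y with rfl | hi
  · rw [Function.update_self]
  · rw [Function.update_of_ne hi]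
    by_cases hBi : B i = Letter.star
    · have hiSB : i ∈ SB := by simp [hSB, hBi]
      have hiSV : i ∈ SV := by
        by_contra h
        have : i ∈ SB \ SV := mem_sdiff.mpr ⟨hiSB, h⟩
        rw [hy, mem_singleton] at this
        exact hi this
      rw [(mem_filter.mp hiSV).2, hBi]
    · exact hagree i hBi

lemma oneRight_noOneRight {n : ℕ} {S : FSeq n} (h1 : OneRight S) (h2 : NoOneRight S) : False := by
  obtain ⟨_, i, hi, hno⟩ := h1
  obtain ⟨j, hij, hj⟩ := h2.2 i hi
  exact hno j hij hj

lemma zeroLeft_noZeroLeft {n : ℕ} {S : FSeq n} (h1 : ZeroLeft S) (h2 : NoZeroLeft S) : False := by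
  obtain ⟨_, i, hi, hno⟩ := h1
  obtain ⟨j, hij, hj⟩ := h2.2 i hi
  exact hno j hij hj

lemma type1_oneRight {n k m0 m1 : ℕ} {S : FSeq n} (h : Type1 k m0 m1 S) : OneRight S := by
  rcases h with h | h | h
  · exact h.2.1
  · exact h.2.1
  · exact h.2.1

lemma type9_noStar {n k : ℕ} {S : FSeq n} (h : Type9 k S) : countStar S = 0 := by
  have := count_sum S
  obtain ⟨h1, h2, _⟩ := h
  omega

end VAux
namespace VAux

lemma step_core {n k m0 m1 r : ℕ} (P : VPath n k m0 m1 r) (i : Fin (r+1))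
    (hstar : 2 ≤ countStar (P.a i.castSucc)) :
    ∃ (x y : Fin n) (c : Letter), c ≠ Letter.star ∧
      P.a i.castSucc x ≠ Letter.star ∧
      P.b i = Function.update (P.a i.castSucc) x Letter.star ∧
      (Function.update (P.a i.castSucc) x Letter.star) y = Letter.star ∧
      P.a i.succ = Function.update (Function.update (P.a i.castSucc) x Letter.star) y c ∧
      countStar (P.a i.succ) = countStar (P.a i.castSucc) ∧
      ((Type1 k m0 m1 (P.a i.castSucc) ∧ P.a i.castSucc x = Letter.one ∧
          (∀ j, x < j → P.a i.castSucc j = Letter.zero)) ∨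
       ((Type3 k (P.a i.castSucc) ∨ Type5 m0 m1 (P.a i.castSucc) ∨ Type7 m0 m1 (P.a i.castSucc)) ∧
          P.a i.castSucc x = Letter.zero ∧ (∀ j, j < x → P.a i.castSucc j = Letter.one))) := by
  classical
  obtain ⟨hfu, hdisj⟩ := P.mem i
  set u := P.a i.castSucc with hu
  -- extract x and the type facts
  have hmain : ∃ x, u x ≠ Letter.star ∧ P.b i = Function.update u x Letter.star ∧
      ((Type1 k m0 m1 u ∧ u x = Letter.one ∧ (∀ j, x < j → u j = Letter.zero)) ∨
       ((Type3 k u ∨ Type5 m0 m1 u ∨ Type7 m0 m1 u) ∧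
          u x = Letter.zero ∧ (∀ j, j < x → u j = Letter.one))) := by
    have hzl : ∀ (hZ : ZeroLeft u) (x : Fin n), IsLeftmostZero u x → ∀ j, j < x → u j = Letter.one := by
      intro hZ x hx j hj
      obtain ⟨_, z, hz0, hznostar⟩ := hZ
      have hxz : x ≤ z := by
        by_contra h
        exact hx.2 z (by omega) hz0
      have h1 : u j ≠ Letter.zero := hx.2 j hj
      have h2 : u j ≠ Letter.star := hznostar j (lt_of_lt_of_le hj hxz)
      rcases letter_cases (u j) with h | h | h <;> simp_all
    rcases hdisj with ⟨ht, x, hx, hB⟩ | ⟨ht, x, hx, hB⟩ | ⟨ht, x, hx, hB⟩ | ⟨ht, x, hx, hB⟩ | ⟨ht, hap⟩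
    · -- Type1, Apply1
      refine ⟨x, by rw [hx.1]; simp, hB, Or.inl ⟨ht, hx.1, ?_⟩⟩
      intro j hj
      obtain ⟨_, z, hz1, hznostar⟩ := type1_oneRight ht
      have hzx : z ≤ x := by
        by_contra h
        exact hx.2 z (by omega) hz1
      have h1 : u j ≠ Letter.one := hx.2 j hj
      have h2 : u j ≠ Letter.star := hznostar j (lt_of_le_of_lt hzx hj)
      rcases letter_cases (u j) with h | h | h <;> simp_all
    · exact ⟨x, by rw [hx.1]; simp, hB, Or.inr ⟨Or.inl ht, hx.1, hzl ht.2.2.2 x hx⟩⟩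
    · exact ⟨x, by rw [hx.1]; simp, hB, Or.inr ⟨Or.inr (Or.inl ht), hx.1, hzl ht.2.2.2 x hx⟩⟩
    · exact ⟨x, by rw [hx.1]; simp, hB, Or.inr ⟨Or.inr (Or.inr ht), hx.1, hzl ht.2.2.2 x hx⟩⟩
    · exact absurd (type9_noStar ht) (by omega)
  obtain ⟨x, hxs, hB, htype⟩ := hmain
  have hcsB : countStar (P.b i) = countStar u + 1 := by
    rw [hB]; exact filter_update_add u x Letter.star Letter.star hxs rfl
  have h3 : 3 ≤ countStar (P.b i) := by omega
  obtain ⟨y, c, hyB, hcs, hv⟩ :=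
    codim_decomp (P.face_a i.succ) (P.face_b i) (P.codim_right i) h3
  rw [hB] at hyB hv
  refine ⟨x, y, c, hcs, hxs, hB, hyB, hv, ?_, htype⟩
  have := filter_update_sub (Function.update u x Letter.star) y c Letter.star hyB hcs
  have hvc : countStar (P.a i.succ) + 1 = countStar (P.b i) := by
    rw [hv, hB]
    exact this
  omega

end VAux
namespace VAux

def leadF {n : ℕ} (S : FSeq n) : Finset (Fin n) :=
  univ.filter fun i => ∀ j, j ≤ i → S j = Letter.one

def trailF {n : ℕ} (S : FSeq n) : Finset (Fin n) :=
  univ.filter fun i => ∀ j, i ≤ j → S j = Letter.zero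

lemma mono_step {n : ℕ} {u v : FSeq n} {x y : Fin n} {c : Letter}
    (hyB : Function.update u x Letter.star y = Letter.star)
    (hv : v = Function.update (Function.update u x Letter.star) y c)
    (hstars : ∃ p, u p = Letter.star)
    (htype : (u x = Letter.one ∧ ∀ j, x < j → u j = Letter.zero) ∨
             (u x = Letter.zero ∧ ∀ j, j < x → u j = Letter.one)) :
    leadF u ⊆ leadF v ∧ trailF u ⊆ trailF v := by
  obtain ⟨p, hp⟩ := hstars
  constructor
  · intro i hi
    simp only [leadF, mem_filter, mem_univ, true_and] at hi ⊢
    intro j hj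
    have hjx : j ≠ x := by
      rcases htype with ⟨h1, h2⟩ | ⟨h1, h2⟩
      · -- u x = one; p < x and i < p
        have hpx : p < x := by
          rcases lt_trichotomy p x with h | h | h
          · exact h
          · rw [h, h1] at hp; exact Letter.noConfusion hp
          · rw [h2 p h] at hp; exact Letter.noConfusion hp
        have hip : i < p := by
          by_contra h
          rw [hi p (not_lt.mp h)] at hp; exact Letter.noConfusion hp
        intro he; rw [he] at hj; omega
      · intro he
        subst he
        rw [hi j hj] at h1; exact Letter.noConfusion h1
    have hjy : j ≠ y := by
      rcases eq_or_ne y x with rfl | hyx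
      · exact hjx
      · rw [Function.update_of_ne hyx] at hyB
        intro he
        subst he
        rw [hi j hj] at hyB; exact Letter.noConfusion hyB
    rw [hv, Function.update_of_ne hjy, Function.update_of_ne hjx]
    exact hi j hj
  · intro i hi
    simp only [trailF, mem_filter, mem_univ, true_and] at hi ⊢
    intro j hj
    have hjx : j ≠ x := by
      rcases htype with ⟨h1, h2⟩ | ⟨h1, h2⟩
      · intro he
        subst he
        rw [hi j hj] at h1; exact Letter.noConfusion h1
      · -- u x = zero; x < p and p < i
        have hpx : x < p := by
          rcases lt_trichotomy x p with h | h | h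
          · exact h
          · rw [← h, h1] at hp; exact Letter.noConfusion hp
          · rw [h2 p h] at hp; exact Letter.noConfusion hp
        have hip : p < i := by
          by_contra h
          rw [hi p (not_lt.mp h)] at hp; exact Letter.noConfusion hp
        intro he; rw [he] at hj; omega
    have hjy : j ≠ y := by
      rcases eq_or_ne y x with rfl | hyx
      · exact hjx
      · rw [Function.update_of_ne hyx] at hyB
        intro he
        subst he
        rw [hi j hj] at hyB; exact Letter.noConfusion hyB
    rw [hv, Function.update_of_ne hjy, Function.update_of_ne hjx]
    exact hi j hj

end VAux
namespace VAux

lemma step_fine {n k m0 m1 : ℕ} {u v : FSeq n} {x y : Fin n} {c : Letter}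
    (hc : c ≠ Letter.star)
    (hyB : Function.update u x Letter.star y = Letter.star)
    (hv : v = Function.update (Function.update u x Letter.star) y c)
    (hne : u ≠ v)
    (hlead : leadF u = leadF v) (htrail : trailF u = trailF v)
    (htype : (Type1 k m0 m1 u ∧ u x = Letter.one ∧ ∀ j, x < j → u j = Letter.zero) ∨
             ((Type3 k u ∨ Type5 m0 m1 u ∨ Type7 m0 m1 u) ∧ u x = Letter.zero ∧
               ∀ j, j < x → u j = Letter.one)) :
    y ≠ x ∧ u y = Letter.star ∧ v x = Letter.star ∧
      ((Type1 k m0 m1 u ∧ u x = Letter.one ∧ (∀ j, x < j → u j = Letter.zero) ∧ y < x ∧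
          NoOneRight v) ∨
       ((Type3 k u ∨ Type5 m0 m1 u ∨ Type7 m0 m1 u) ∧ u x = Letter.zero ∧
          (∀ j, j < x → u j = Letter.one) ∧ x < y ∧ NoZeroLeft v)) := by
  have hyx : y ≠ x := by
    intro he
    subst he
    have hvu : v = Function.update u y c := by
      rw [hv]; funext j
      rcases eq_or_ne j y with rfl | hj
      · rw [Function.update_self, Function.update_self]
      · rw [Function.update_of_ne hj, Function.update_of_ne hj, Function.update_of_ne hj]
    rcases htype with ⟨ht, h1, h2⟩ | ⟨ht, h1, h2⟩
    · rcases letter_cases c with rfl | rfl | rfl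
      · -- c = zero : trail strict
        have hmem : y ∈ trailF v := by
          simp only [trailF, mem_filter, mem_univ, true_and]
          intro j hj
          rcases eq_or_ne j y with rfl | hjy
          · rw [hvu, Function.update_self]
          · have hlt : y < j := lt_of_le_of_ne hj (Ne.symm hjy)
            rw [hvu, Function.update_of_ne hjy]
            exact h2 j hlt
        rw [← htrail] at hmem
        simp only [trailF, mem_filter, mem_univ, true_and] at hmem
        rw [hmem y le_rfl] at h1; exact Letter.noConfusion h1
      · -- c = one : v = u
        apply hne
        rw [hvu, ← h1, Function.update_eq_self]
      · exact absurd rfl hc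
    · rcases letter_cases c with rfl | rfl | rfl
      · apply hne
        rw [hvu, ← h1, Function.update_eq_self]
      · -- c = one : lead strict
        have hmem : y ∈ leadF v := by
          simp only [leadF, mem_filter, mem_univ, true_and]
          intro j hj
          rcases eq_or_ne j y with rfl | hjy
          · rw [hvu, Function.update_self]
          · have hlt : j < y := lt_of_le_of_ne hj hjy
            rw [hvu, Function.update_of_ne hjy]
            exact h2 j hlt
        rw [← hlead] at hmem
        simp only [leadF, mem_filter, mem_univ, true_and] at hmem
        rw [hmem y le_rfl] at h1; exact Letter.noConfusion h1
      · exact absurd rfl hc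
  have huy : u y = Letter.star := by
    rw [Function.update_of_ne hyx] at hyB; exact hyB
  have hvx : v x = Letter.star := by
    rw [hv, Function.update_of_ne (Ne.symm hyx), Function.update_self]
  refine ⟨hyx, huy, hvx, ?_⟩
  rcases htype with ⟨ht, h1, h2⟩ | ⟨ht, h1, h2⟩
  · have hylt : y < x := by
      rcases lt_trichotomy y x with h | h | h
      · exact h
      · exact absurd h hyx
      · rw [h2 y h] at huy; exact Letter.noConfusion huy
    refine Or.inl ⟨ht, h1, h2, hylt, ⟨x, hvx⟩, ?_⟩
    intro z hz
    refine ⟨x, ?_, hvx⟩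
    have hzx : z ≠ x := by intro he; rw [he, hvx] at hz; exact Letter.noConfusion hz
    rcases eq_or_ne z y with rfl | hzy
    · exact hylt
    · have hz' : u z = Letter.one := by
        rw [hv, Function.update_of_ne hzy, Function.update_of_ne hzx] at hz; exact hz
      rcases lt_trichotomy z x with h | h | h
      · exact h
      · exact absurd h hzx
      · rw [h2 z h] at hz'; exact Letter.noConfusion hz'
  · have hylt : x < y := by
      rcases lt_trichotomy x y with h | h | h
      · exact h
      · exact absurd h.symm hyx
      · rw [h2 y h] at huy; exact Letter.noConfusion huy
    refine Or.inr ⟨ht, h1, h2, hylt, ⟨x, hvx⟩, ?_⟩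
    intro z hz
    refine ⟨x, ?_, hvx⟩
    have hzx : z ≠ x := by intro he; rw [he, hvx] at hz; exact Letter.noConfusion hz
    rcases eq_or_ne z y with rfl | hzy
    · exact hylt
    · have hz' : u z = Letter.zero := by
        rw [hv, Function.update_of_ne hzy, Function.update_of_ne hzx] at hz; exact hz
      rcases lt_trichotomy x z with h | h | h
      · exact h
      · exact absurd h.symm hzx
      · rw [h2 z h] at hz'; exact Letter.noConfusion hz'

lemma vmatch_kill {n k m0 m1 : ℕ} {w B' : FSeq n} (h1 : NoZeroLeft w) (h2 : NoOneRight w)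
    (h3 : 1 ≤ countStar w) (hm : Vmatch k m0 m1 w B') : False := by
  rcases hm.2 with ⟨ht, _⟩ | ⟨ht, _⟩ | ⟨ht, _⟩ | ⟨ht, _⟩ | ⟨ht, _⟩
  · exact oneRight_noOneRight (type1_oneRight ht) h2
  · exact zeroLeft_noZeroLeft ht.2.2.2 h1
  · exact zeroLeft_noZeroLeft ht.2.2.2 h1
  · exact zeroLeft_noZeroLeft ht.2.2.2 h1
  · exact absurd (type9_noStar ht) (by omega)

lemma vmatch_kill2 {n k m0 m1 : ℕ} {w B' : FSeq n} (h1 : NoZeroLeft w)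
    (h3 : 1 ≤ countStar w) (hc1 : count1 w = m1) (hc0 : count0 w + 1 ≤ m0)
    (hm : Vmatch k m0 m1 w B') : False := by
  rcases hm.2 with ⟨ht, _⟩ | ⟨ht, _⟩ | ⟨ht, _⟩ | ⟨ht, _⟩ | ⟨ht, _⟩
  · rcases ht with ⟨_, _, hne⟩ | ⟨_, _, _, hgt⟩ | ⟨_, _, _, heq, _⟩ <;> omega
  · exact zeroLeft_noZeroLeft ht.2.2.2 h1
  · exact zeroLeft_noZeroLeft ht.2.2.2 h1
  · exact zeroLeft_noZeroLeft ht.2.2.2 h1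
  · exact absurd (type9_noStar ht) (by omega)

lemma fin_mono {r : ℕ} (f : Fin (r + 2) → ℕ)
    (hstep : ∀ i : Fin (r + 1), f i.castSucc ≤ f i.succ) :
    ∀ i j : Fin (r + 2), i ≤ j → f i ≤ f j := by
  intro i j
  induction j using Fin.induction with
  | zero =>
    intro h
    have : i = 0 := le_antisymm h (Fin.zero_le i)
    rw [this]
  | succ jj ih =>
    intro hij
    rcases eq_or_ne i jj.succ with rfl | hne
    · exact le_rfl
    · have hv1 : (i : ℕ) ≤ (jj : ℕ) + 1 := by
        have := Fin.le_def.mp hij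
        simpa [Fin.val_succ] using this
      have hv2 : (i : ℕ) ≠ (jj : ℕ) + 1 := by
        intro h
        apply hne
        apply Fin.ext
        simp [Fin.val_succ, h]
      have h1 : i ≤ jj.castSucc := by
        rw [Fin.le_def]
        simp only [Fin.coe_castSucc]
        omega
      exact le_trans (ih h1) (hstep jj)

end VAux
open VAux Finset in
/-- There is no nontrivial closed `V`-path starting at a face sequence
of type 3, 5 or 7. -/
theorem no_closed_vpath_type357 (n k m0 m1 : ℕ) (hk1 : 1 ≤ k) (hk2 : k ≤ n - 1)
    (hm0 : m0 + k + 1 ≤ n) (hm1l : 1 ≤ m1) (hm1u : m1 + 1 ≤ k) (r : ℕ)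
    (P : VPath n k m0 m1 r)
    (h0 : Type3 k (P.a 0) ∨ Type5 m0 m1 (P.a 0) ∨ Type7 m0 m1 (P.a 0)) :
    P.a 0 ≠ P.a (Fin.last (r + 1)) := by
  classical
  intro hcl
  have hZL0 : ZeroLeft (P.a 0) := by
    rcases h0 with h | h | h
    exacts [h.2.2.2, h.2.2.2, h.2.2.2]
  have hstar0 : 2 ≤ countStar (P.a 0) := (faceSeq_star (P.face_a 0) hZL0.1).2.2
  have hstar : ∀ i : Fin (r + 2), 2 ≤ countStar (P.a i) := by
    intro i
    induction i using Fin.induction with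
    | zero => exact hstar0
    | succ i ih =>
      obtain ⟨x, y, c, _, _, _, _, _, hcount, _⟩ := step_core P i ih
      rw [hcount]; exact ih
  -- existence of a star position in each a i
  have hexstar : ∀ i : Fin (r + 2), ∃ p, P.a i p = Letter.star := by
    intro i
    have := hstar i
    obtain ⟨p, hp⟩ := card_pos.mp (by omega : 0 < countStar (P.a i))
    exact ⟨p, (mem_filter.mp hp).2⟩
  -- per-step lead/trail subset
  have hsub : ∀ i : Fin (r + 1),
      leadF (P.a i.castSucc) ⊆ leadF (P.a i.succ) ∧
      trailF (P.a i.castSucc) ⊆ trailF (P.a i.succ) := by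
    intro i
    obtain ⟨x, y, c, hc, hxs, hB, hyB, hv, hcount, htype⟩ := step_core P i (hstar _)
    refine mono_step hyB hv (hexstar _) ?_
    rcases htype with ⟨_, h1, h2⟩ | ⟨_, h1, h2⟩
    exacts [Or.inl ⟨h1, h2⟩, Or.inr ⟨h1, h2⟩]
  -- telescoping equalities
  have hmonoL := fin_mono (fun i => (leadF (P.a i)).card) (fun i => card_le_card (hsub i).1)
  have hmonoT := fin_mono (fun i => (trailF (P.a i)).card) (fun i => card_le_card (hsub i).2)
  have hflip : ∀ f : Fin (r + 2) → ℕ,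
      (∀ i j : Fin (r + 2), i ≤ j → f i ≤ f j) → f (Fin.last (r + 1)) = f 0 →
      ∀ i : Fin (r + 1), f i.castSucc = f i.succ := by
    intro f hmono hend i
    have h1 : f i.castSucc ≤ f i.succ := hmono _ _ (Fin.castSucc_le_succ i)
    have h2 : f i.succ ≤ f (Fin.last (r + 1)) := hmono _ _ (Fin.le_last _)
    have h3 : f 0 ≤ f i.castSucc := hmono _ _ (Fin.zero_le _)
    omega
  have hLeq : ∀ i : Fin (r + 1), leadF (P.a i.castSucc) = leadF (P.a i.succ) := by
    intro i
    refine Finset.eq_of_subset_of_card_le (hsub i).1 ?_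
    have := hflip (fun i => (leadF (P.a i)).card) hmonoL (by simp [← hcl]) i
    omega
  have hTeq : ∀ i : Fin (r + 1), trailF (P.a i.castSucc) = trailF (P.a i.succ) := by
    intro i
    refine Finset.eq_of_subset_of_card_le (hsub i).2 ?_
    have := hflip (fun i => (trailF (P.a i)).card) hmonoT (by simp [← hcl]) i
    omega
  -- if a successor face is not the last one, it is matched
  have hmatched : ∀ i : Fin (r + 1), NoZeroLeft (P.a i.succ) →
      ∃ B', Vmatch k m0 m1 (P.a i.succ) B' := by
    intro i hnz
    rcases eq_or_ne i.succ (Fin.last (r + 1)) with he | he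
    · exfalso
      rw [he, ← hcl] at hnz
      exact zeroLeft_noZeroLeft hZL0 hnz
    · have hlt : (i : ℕ) + 1 < r + 1 := by
        have h1 : (i : ℕ) < r + 1 := i.isLt
        rcases lt_or_eq_of_le (Nat.succ_le_of_lt h1) with h | h
        · exact h
        · exact absurd (Fin.ext (by simp [Fin.val_succ, Fin.val_last]; omega)) he
      have hji : (⟨(i : ℕ) + 1, hlt⟩ : Fin (r + 1)).castSucc = i.succ := by
        apply Fin.ext; simp [Fin.val_succ]
      exact ⟨P.b ⟨(i : ℕ) + 1, hlt⟩, hji ▸ P.mem ⟨(i : ℕ) + 1, hlt⟩⟩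
  -- ### analysis of the last step: a 0 is of type 3 or 7 and NoOneRight
  have hlaststep : NoOneRight (P.a 0) ∧ (Type3 k (P.a 0) ∨ Type7 m0 m1 (P.a 0)) := by
    obtain ⟨x, y, c, hc, hxs, hB, hyB, hv, hcount, htype⟩ := step_core P (Fin.last r) (hstar _)
    have hvA0 : P.a (Fin.last r).succ = P.a 0 := by rw [Fin.succ_last]; exact hcl.symm
    obtain ⟨hyx, huy, hvx, hfine⟩ :=
      step_fine hc hyB hv (P.step_ne (Fin.last r)) (hLeq (Fin.last r)) (hTeq (Fin.last r)) htype
    rcases hfine with ⟨ht1, _, _, _, hnor⟩ | ⟨ht357, _, _, _, hnzl⟩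
    · rw [hvA0] at hnor
      refine ⟨hnor, ?_⟩
      rcases h0 with h | h | h
      · exact Or.inl h
      · exact absurd (oneRight_noOneRight h.2.2.1 hnor) id
      · exact Or.inr h
    · rw [hvA0] at hnzl
      exact absurd (zeroLeft_noZeroLeft hZL0 hnzl) id
  obtain ⟨hNOR0, hT37⟩ := hlaststep
  -- ### analysis of the first step
  obtain ⟨x, y, c, hc, hxs, hB, hyB, hv, hcount, htype⟩ := step_core P 0 (hstar _)
  rw [Fin.castSucc_zero] at hxs hyB hv htype
  have hne0 := P.step_ne 0
  have hLeq0 := hLeq 0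
  have hTeq0 := hTeq 0
  rw [Fin.castSucc_zero] at hne0 hLeq0 hTeq0
  obtain ⟨hyx, huy, hvx, hfine⟩ := step_fine hc hyB hv hne0 hLeq0 hTeq0 htype
  rcases hfine with ⟨ht1, _, _, _, _⟩ | ⟨ht357, hx0, hQx, hxy, hNZLv⟩
  · exact oneRight_noOneRight (type1_oneRight ht1) hNOR0
  -- the rightmost star R of a 0
  have hSne : (univ.filter fun p => P.a 0 p = Letter.star).Nonempty := by
    obtain ⟨p, hp⟩ := hexstar 0
    exact ⟨p, by simp [hp]⟩
  set R := (univ.filter fun p => P.a 0 p = Letter.star).max' hSne with hR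
  have huR : P.a 0 R = Letter.star := (mem_filter.mp (max'_mem _ hSne)).2
  have hRmax : ∀ p, P.a 0 p = Letter.star → p ≤ R :=
    fun p hp => le_max' _ p (by simp [hp])
  have hZr : ∀ j, R < j → P.a 0 j = Letter.zero := by
    intro j hj
    have h1 : P.a 0 j ≠ Letter.star := fun h => absurd (hRmax j h) (not_le.mpr hj)
    have h2 : P.a 0 j ≠ Letter.one := by
      intro h
      obtain ⟨p, hpj, hps⟩ := hNOR0.2 j h
      exact absurd (hRmax p hps) (not_le.mpr (lt_trans hj hpj))
    rcases letter_cases (P.a 0 j) with h | h | h <;> simp_all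
  have hyR : y ≤ R := hRmax y huy
  have hxR : x < R := lt_of_lt_of_le hxy hyR
  set v1 := P.a (0 : Fin (r + 1)).succ with hv1def
  have hstarv1 : 1 ≤ countStar v1 := by
    have h := hstar ((0 : Fin (r + 1)).succ)
    rw [← hv1def] at h
    omega
  rcases lt_or_eq_of_le hyR with hylt | hyeq
  · -- case y < R : v1 has a star at R, is NoOneRight and NoZeroLeft : unmatched, contradiction
    have hvR : v1 R = Letter.star := by
      rw [hv, Function.update_of_ne (ne_of_gt hylt), Function.update_of_ne (ne_of_gt hxR)]
      exact huR
    have hNORv : NoOneRight v1 := by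
      refine ⟨⟨R, hvR⟩, ?_⟩
      intro z hz
      refine ⟨R, ?_, hvR⟩
      have hzx : z ≠ x := by intro he; rw [he, hvx] at hz; exact Letter.noConfusion hz
      rcases eq_or_ne z y with rfl | hzy
      · exact hylt
      · have hz' : P.a 0 z = Letter.one := by
          rw [hv, Function.update_of_ne hzy, Function.update_of_ne hzx] at hz; exact hz
        obtain ⟨p, hpz, hps⟩ := hNOR0.2 z hz'
        exact lt_of_lt_of_le hpz (hRmax p hps)
    obtain ⟨B', hm⟩ := hmatched 0 hNZLv
    exact vmatch_kill hNZLv hNORv hstarv1 hm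
  · -- case y = R
    rcases letter_cases c with rfl | rfl | rfl
    · -- c = zero : trail strictly increases, contradiction
      have hmem : R ∈ trailF v1 := by
        simp only [trailF, mem_filter, mem_univ, true_and]
        intro j hj
        rcases eq_or_ne j R with rfl | hjR
        · rw [hv, hyeq, Function.update_self]
        · have hlt : R < j := lt_of_le_of_ne hj (Ne.symm hjR)
          rw [hv, hyeq, Function.update_of_ne hjR,
            Function.update_of_ne (ne_of_gt (lt_trans hxR hlt))]
          exact hZr j hlt
      have hmem' : R ∈ trailF (P.a 0) := by
        rw [hTeq0]; exact hmem
      simp only [trailF, mem_filter, mem_univ, true_and] at hmem'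
      rw [hmem' R le_rfl] at huR; exact Letter.noConfusion huR
    · -- c = one : count computations and contradiction with rule-1 conditions
      have e1 : count1 (Function.update (P.a 0) x Letter.star) = count1 (P.a 0) := by
        unfold count1
        rw [filter_update_of_ne (P.a 0) x Letter.star Letter.one (by rw [hx0]; simp) (by simp)]
      have e2 : count1 v1 = count1 (Function.update (P.a 0) x Letter.star) + 1 := by
        unfold count1
        rw [hv, hyeq]
        exact filter_update_add _ R Letter.one Letter.one
          (by rw [Function.update_of_ne (ne_of_gt hxR), huR]; simp) rfl
      have e3 : count0 (Function.update (P.a 0) x Letter.star) + 1 = count0 (P.a 0) := by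
        unfold count0
        exact filter_update_sub (P.a 0) x Letter.star Letter.zero hx0 (by simp)
      have e4 : count0 v1 = count0 (Function.update (P.a 0) x Letter.star) := by
        unfold count0
        rw [hv, hyeq]
        rw [filter_update_of_ne _ R Letter.one Letter.zero
          (by rw [Function.update_of_ne (ne_of_gt hxR), huR]; simp) (by simp)]
      rcases hT37 with h3 | h7
      · -- Type 3 : v1 would have k ones with stars left, not a face sequence
        have hfv1 : FaceSeq k v1 := P.face_a _
        have hc1 : count1 v1 = k := by have := h3.1; omega
        rcases hfv1 with ⟨hs0, _⟩ | ⟨hle, _⟩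
        · omega
        · omega
      · -- Type 7 : v1 violates every subcondition of rule 1
        have hm1' : count1 v1 = m1 := by have := h7.1; omega
        have hm0' : count0 v1 + 1 ≤ m0 := by have := h7.2.1; omega
        obtain ⟨B', hm⟩ := hmatched 0 hNZLv
        exact vmatch_kill2 hNZLv hstarv1 hm1' hm0' hm
    · exact absurd rfl hc
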